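/- Let R be a commutative Noetherian ring, *R its ultrapower over an ultrafilter, and M a finitely generated R-module. Then the set of associated primes of the *R-module *M equals {p·*R : p ∈ Ass_R(M)}. -/

import Mathlib

open Filter

/-- The diagonal embedding of `R` into its ultrapower `*R = (ι → R)/U`. -/
noncomputable def diag {ι : Type*} (U : Ultrafilter ι) (R : Type*) [CommRing R] :
    R →+* Filter.Germ (U : Filter ι) R :=
  (Filter.Germ.coeRingHom (U : Filter ι)).comp (Pi.constRingHom ι R)

section Aux

variable {ι R M : Type*} [CommRing R] [AddCommGroup M] [Module R M] (U : Ultrafilter ι)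

lemma diag_apply (a : R) : diag U R a = (↑(fun _ : ι => a) : Filter.Germ (U : Filter ι) R) := rfl

lemma germ_coe_eq_zero {f : ι → M} :
    ((↑f : Filter.Germ (U : Filter ι) M) = 0) ↔ ∀ᶠ i in U, f i = 0 := by
  rw [← Filter.Germ.coe_zero, Filter.Germ.coe_eq]; exact Iff.rfl

lemma germ_smul_coe (c : ι → R) (f : ι → M) :
    (↑c : Filter.Germ (U : Filter ι) R) • (↑f : Filter.Germ (U : Filter ι) M) =
      ↑(fun i => c i • f i) := by
  rw [← Filter.Germ.coe_smul']; rfl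

lemma germ_mul_coe (c f : ι → R) :
    (↑c : Filter.Germ (U : Filter ι) R) * ↑f = ↑(fun i => c i * f i) := by
  rw [← Filter.Germ.coe_mul]; rfl

/-- The ideal of germs eventually in `p`. -/
def eIdeal (p : Ideal R) : Ideal (Filter.Germ (U : Filter ι) R) where
  carrier := {x | Filter.Germ.LiftPred (· ∈ p) x}
  zero_mem' := by
    rw [Set.mem_setOf_eq, ← Filter.Germ.coe_zero, Filter.Germ.liftPred_coe]
    exact Eventually.of_forall fun _ => p.zero_mem
  add_mem' := by
    intro a b ha hb
    revert ha hb
    refine Filter.Germ.inductionOn₂ a b fun f g => ?_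
    intro hf hg
    rw [Set.mem_setOf_eq, Filter.Germ.liftPred_coe] at hf hg
    rw [Set.mem_setOf_eq, ← Filter.Germ.coe_add, Filter.Germ.liftPred_coe]
    exact (hf.and hg).mono fun i h => p.add_mem h.1 h.2
  smul_mem' := by
    intro c x hx
    revert hx
    refine Filter.Germ.inductionOn₂ c x fun f g => ?_
    intro hg
    rw [Set.mem_setOf_eq, Filter.Germ.liftPred_coe] at hg
    rw [Set.mem_setOf_eq, smul_eq_mul, germ_mul_coe, Filter.Germ.liftPred_coe]
    exact hg.mono fun i h => p.mul_mem_left _ h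

lemma mem_eIdeal {p : Ideal R} {f : ι → R} :
    (↑f : Filter.Germ (U : Filter ι) R) ∈ eIdeal U p ↔ ∀ᶠ i in U, f i ∈ p :=
  Filter.Germ.liftPred_coe

lemma eIdeal_isPrime {p : Ideal R} (hp : p.IsPrime) : (eIdeal U p).IsPrime := by
  constructor
  · intro h
    have h1 : (↑(fun _ : ι => (1 : R)) : Filter.Germ (U : Filter ι) R) ∈ eIdeal U p := by
      rw [h]; trivial
    rw [mem_eIdeal] at h1
    obtain ⟨i, hi⟩ := h1.exists
    exact hp.ne_top (p.eq_top_of_isUnit_mem hi isUnit_one)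
  · intro x y hxy
    revert hxy
    refine Filter.Germ.inductionOn₂ x y fun f g => ?_
    intro hfg
    rw [germ_mul_coe, mem_eIdeal] at hfg
    have : ∀ᶠ i in U, f i ∈ p ∨ g i ∈ p := hfg.mono fun i h => hp.mem_or_mem h
    rcases Ultrafilter.eventually_or.mp this with h | h
    · exact Or.inl (mem_eIdeal U |>.mpr h)
    · exact Or.inr (mem_eIdeal U |>.mpr h)

lemma map_diag_eq [IsNoetherianRing R] (p : Ideal R) :
    p.map (diag U R) = eIdeal U p := by
  apply le_antisymm
  · rw [Ideal.map_le_iff_le_comap]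
    intro a ha
    rw [Ideal.mem_comap, diag_apply, mem_eIdeal]
    exact Eventually.of_forall fun _ => ha
  · intro x hx
    revert hx
    refine Filter.Germ.inductionOn x fun g => ?_
    intro hg
    rw [mem_eIdeal] at hg
    obtain ⟨F, hF⟩ := IsNoetherian.noetherian p
    have hchoice : ∀ i, ∃ cf : R → R, g i ∈ p → ∑ a ∈ F, cf a * a = g i := by
      intro i
      by_cases h : g i ∈ p
      · rw [← hF] at h
        obtain ⟨cf, -, hcf⟩ := Submodule.mem_span_finset.mp h
        exact ⟨cf, fun _ => by simpa [smul_eq_mul] using hcf⟩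
      · exact ⟨0, fun h' => absurd h' h⟩
    choose cf hcf using hchoice
    have key : (↑g : Filter.Germ (U : Filter ι) R) =
        ∑ a ∈ F, (↑(fun i => cf i a) : Filter.Germ (U : Filter ι) R) * diag U R a := by
      have : (∑ a ∈ F, (↑(fun i => cf i a) : Filter.Germ (U : Filter ι) R) * diag U R a) =
          ↑(fun i => ∑ a ∈ F, cf i a * a) := by
        rw [show (fun i => ∑ a ∈ F, cf i a * a) = ∑ a ∈ F, (fun i => cf i a * a) from by
          ext i; simp]
        rw [show ((∑ a ∈ F, fun i => cf i a * a : ι → R) : Filter.Germ (U : Filter ι) R) =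
          ∑ a ∈ F, (↑(fun i => cf i a * a) : Filter.Germ (U : Filter ι) R) from
            map_sum (Filter.Germ.coeRingHom (U : Filter ι)) _ F]
        exact Finset.sum_congr rfl fun a _ => (germ_mul_coe U _ _).symm
      rw [this, Filter.Germ.coe_eq]
      exact hg.mono fun i h => (hcf i h).symm
    rw [key]
    exact Ideal.sum_mem _ fun a ha =>
      Ideal.mul_mem_left _ _ (Ideal.mem_map_of_mem _ (hF ▸ Submodule.subset_span ha))

/-- The submodule of germs eventually in `N`. -/
def eSubmodule (N : Submodule R M) :
    Submodule (Filter.Germ (U : Filter ι) R) (Filter.Germ (U : Filter ι) M) where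
  carrier := {x | Filter.Germ.LiftPred (· ∈ N) x}
  zero_mem' := by
    rw [Set.mem_setOf_eq, ← Filter.Germ.coe_zero, Filter.Germ.liftPred_coe]
    exact Eventually.of_forall fun _ => N.zero_mem
  add_mem' := by
    intro a b ha hb
    revert ha hb
    refine Filter.Germ.inductionOn₂ a b fun f g => ?_
    intro hf hg
    rw [Set.mem_setOf_eq, Filter.Germ.liftPred_coe] at hf hg
    rw [Set.mem_setOf_eq, ← Filter.Germ.coe_add, Filter.Germ.liftPred_coe]
    exact (hf.and hg).mono fun i h => N.add_mem h.1 h.2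
  smul_mem' := by
    intro c x hx
    revert hx
    refine Filter.Germ.inductionOn₂ c x fun f g => ?_
    intro hg
    rw [Set.mem_setOf_eq, Filter.Germ.liftPred_coe] at hg
    rw [Set.mem_setOf_eq, germ_smul_coe, Filter.Germ.liftPred_coe]
    exact hg.mono fun i h => N.smul_mem _ h

lemma mem_rad_colon {A N : Type*} [CommRing A] [AddCommGroup N] [Module A N] (x : N) (r : A) :
    r ∈ ((⊥ : Submodule A N).colon {x}).radical ↔ ∃ n : ℕ, r ^ n • x = 0 := by
  simp only [Ideal.mem_radical_iff, Submodule.mem_colon_singleton, Submodule.mem_bot]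

lemma mem_eSubmodule {N : Submodule R M} {f : ι → M} :
    (↑f : Filter.Germ (U : Filter ι) M) ∈ eSubmodule U N ↔ ∀ᶠ i in U, f i ∈ N :=
  Filter.Germ.liftPred_coe

/-- One step of a prime filtration: `B = A + R·m` with `(A : m)` prime. -/
def FiltStep (A B : Submodule R M) : Prop :=
  ∃ m : M, B = A ⊔ (R ∙ m) ∧
    Ideal.IsPrime (Submodule.comap (LinearMap.toSpanSingleton R M m) A)

/-- `N` admits a prime filtration from `⊥`. -/
def FiltGood (N : Submodule R M) : Prop :=
  ∃ (s : ℕ) (c : ℕ → Submodule R M), c 0 = ⊥ ∧ c s = N ∧ ∀ t < s, FiltStep (c t) (c (t + 1))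

lemma exists_prime_filtration [IsNoetherianRing R] [Module.Finite R M] :
    ∃ (s : ℕ) (c : ℕ → Submodule R M), c 0 = ⊥ ∧ c s = ⊤ ∧
      ∀ t < s, FiltStep (c t) (c (t + 1)) := by
  have hN : IsNoetherian R M := inferInstance
  have hgoodbot : FiltGood (⊥ : Submodule R M) :=
    ⟨0, fun _ => ⊥, rfl, rfl, fun t ht => absurd ht (Nat.not_lt_zero t)⟩
  obtain ⟨N, hNg, hmax⟩ := (set_has_maximal_iff_noetherian.mpr hN)
    {N : Submodule R M | FiltGood N} ⟨⊥, hgoodbot⟩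
  by_cases hNtop : N = ⊤
  · obtain ⟨s, c, h0, hs, hst⟩ := hNg
    exact ⟨s, c, h0, hNtop ▸ hs, hst⟩
  exfalso
  obtain ⟨m, -, hmN⟩ := SetLike.exists_of_lt (lt_top_iff_ne_top.mpr hNtop : N < ⊤)
  have hx : (Submodule.Quotient.mk m : M ⧸ N) ≠ 0 := by
    rw [Ne, Submodule.Quotient.mk_eq_zero]; exact hmN
  obtain ⟨P, hPass, -⟩ :=
    exists_le_isAssociatedPrime_of_isNoetherianRing R (Submodule.Quotient.mk m) hx
  obtain ⟨hPprime, y, hPy⟩ := isAssociatedPrime_iff.mp hPass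
  obtain ⟨m', hm'⟩ := Submodule.Quotient.mk_surjective N y
  have hq : Submodule.comap (LinearMap.toSpanSingleton R M m') N = P := by
    ext a
    rw [Submodule.mem_comap, LinearMap.toSpanSingleton_apply, hPy,
      Submodule.mem_colon_singleton, Submodule.mem_bot, ← hm', ← Submodule.Quotient.mk_smul,
      Submodule.Quotient.mk_eq_zero]
  have hm'N : m' ∉ N := by
    intro h
    apply hPprime.ne_top
    apply Ideal.eq_top_of_isUnit_mem _ _ isUnit_one
    rw [← hq, Submodule.mem_comap, LinearMap.toSpanSingleton_apply, one_smul]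
    exact h
  set N' := N ⊔ (R ∙ m') with hN'
  have hlt : N < N' := by
    refine lt_of_le_of_ne le_sup_left fun h => ?_
    have hmem : m' ∈ N' := Submodule.mem_sup_right (Submodule.mem_span_singleton_self m')
    rw [← h] at hmem
    exact hm'N hmem
  refine hmax N' ?_ hlt
  obtain ⟨s, c, h0, hs, hst⟩ := hNg
  refine ⟨s + 1, fun t => if t ≤ s then c t else N', by simpa using h0, by simp, ?_⟩
  intro t ht
  rcases Nat.lt_succ_iff_lt_or_eq.mp ht with ht' | hts
  · simpa [Nat.le_of_lt ht', Nat.succ_le_of_lt ht'] using hst t ht'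
  · subst hts
    show FiltStep (if t ≤ t then c t else N') (if t + 1 ≤ t then c (t + 1) else N')
    rw [if_pos le_rfl, if_neg (show ¬t + 1 ≤ t by omega)]
    exact ⟨m', by rw [hs], by rw [hs, hq]; exact hPprime⟩

lemma key_lemma [IsNoetherianRing R] (c : ℕ → Submodule R M) (hc0 : c 0 = ⊥) :
    ∀ s : ℕ, (∀ t < s, FiltStep (c t) (c (t + 1))) → ∀ w : ι → M,
      (∀ᶠ i in U, w i ∈ c s) →
      ∀ P : Ideal (Filter.Germ (U : Filter ι) R), P.IsPrime →
      P = ((⊥ : Submodule (Filter.Germ (U : Filter ι) R) (Filter.Germ (U : Filter ι) M)).colon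
            {(↑w : Filter.Germ (U : Filter ι) M)}).radical →
      ∃ q : Ideal R, q.IsPrime ∧ P = eIdeal U q := by
  intro s
  induction s with
  | zero =>
    intro _ w hw P hP hPx
    exfalso
    apply hP.ne_top
    have hw0 : (↑w : Filter.Germ (U : Filter ι) M) = 0 := by
      rw [germ_coe_eq_zero]
      exact hw.mono fun i h => by simpa [hc0] using h
    apply Ideal.eq_top_of_isUnit_mem _ _ isUnit_one
    rw [hPx, hw0, mem_rad_colon]
    exact ⟨1, smul_zero _⟩
  | succ s IH =>
    intro hsteps w hw P hP hPx
    obtain ⟨m, hcsup, hq⟩ := hsteps s (Nat.lt_succ_self s)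
    set q : Ideal R := Submodule.comap (LinearMap.toSpanSingleton R M m) (c s) with hqdef
    have hmemq : ∀ a : R, a ∈ q ↔ a • m ∈ c s := fun a => by
      rw [hqdef, Submodule.mem_comap, LinearMap.toSpanSingleton_apply]
    -- decompose w i = n i + r i • m with n i ∈ c s, eventually
    have hdec : ∀ i, ∃ y : M × R, w i ∈ c (s + 1) → (y.1 ∈ c s ∧ w i = y.1 + y.2 • m) := by
      intro i
      by_cases h : w i ∈ c (s + 1)
      · rw [hcsup] at h
        obtain ⟨y, hy, z, hz, hyz⟩ := Submodule.mem_sup.mp h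
        obtain ⟨a, rfl⟩ := Submodule.mem_span_singleton.mp hz
        exact ⟨(y, a), fun _ => ⟨hy, hyz.symm⟩⟩
      · exact ⟨(0, 0), fun h' => absurd h' h⟩
    choose nr hnr using hdec
    have hwnr : ∀ᶠ i in U, (nr i).1 ∈ c s ∧ w i = (nr i).1 + (nr i).2 • m :=
      hw.mono fun i h => hnr i h
    by_cases hA : ∃ g : ι → R, (∀ᶠ i in U, g i • w i ∈ c s) ∧
        (↑g : Filter.Germ (U : Filter ι) R) ∉ P
    · -- go down one step
      obtain ⟨g, hg1, hg2⟩ := hA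
      set x' : ι → M := fun i => g i • w i with hx'
      have hgx : (↑g : Filter.Germ (U : Filter ι) R) • (↑w : Filter.Germ (U : Filter ι) M) =
          ↑x' := germ_smul_coe U g w
      have hPx' : P = ((⊥ : Submodule (Filter.Germ (U : Filter ι) R)
          (Filter.Germ (U : Filter ι) M)).colon
          {(↑x' : Filter.Germ (U : Filter ι) M)}).radical := by
        ext z
        rw [mem_rad_colon, ← hgx]
        constructor
        · intro hz
          rw [hPx, mem_rad_colon] at hz
          obtain ⟨n, hn⟩ := hz
          exact ⟨n, by rw [smul_comm, hn, smul_zero]⟩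
        · rintro ⟨n, hn⟩
          rw [← mul_smul] at hn
          have hzg : z ^ n * ↑g ∈ P := by
            rw [hPx, mem_rad_colon]; exact ⟨1, by rw [pow_one]; exact hn⟩
          rcases hP.mem_or_mem hzg with h | h
          · exact hP.mem_of_pow_mem n h
          · exact absurd h hg2
      exact IH (fun t ht => hsteps t (ht.trans (Nat.lt_succ_self s))) x' hg1 P hP hPx'
    · push_neg at hA
      set r : ι → R := fun i => (nr i).2 with hr
      -- membership characterization of P
      have hPchar : ∀ g : ι → R, ((↑g : Filter.Germ (U : Filter ι) R) ∈ P ↔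
          ∀ᶠ i in U, g i * r i ∈ q) := by
        intro g
        constructor
        · intro h
          rw [hPx, mem_rad_colon] at h
          obtain ⟨n, hn⟩ := h
          rw [← Filter.Germ.coe_pow, germ_smul_coe, germ_coe_eq_zero] at hn
          refine (hn.and hwnr).mono fun i ⟨h0, hn', hw'⟩ => ?_
          have h0' : g i ^ n • w i = 0 := h0
          have key : g i ^ n * r i ∈ q := by
            rw [hmemq, mul_smul]
            have : g i ^ n • w i = g i ^ n • (nr i).1 + (g i ^ n * r i) • m := by
              rw [hw', smul_add, mul_smul]
            have h2 : (g i ^ n * r i) • m = -(g i ^ n • (nr i).1) :=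
              eq_neg_of_add_eq_zero_left (by rw [add_comm, ← this]; exact h0')
            rw [mul_smul] at h2
            rw [h2]
            exact (c s).neg_mem ((c s).smul_mem _ hn')
          rcases hq.mem_or_mem key with h' | h'
          · exact q.mul_mem_right _ (hq.mem_of_pow_mem n h')
          · exact q.mul_mem_left _ h'
        · intro h
          apply hA g
          refine (h.and hwnr).mono fun i ⟨hq', hn, hw'⟩ => ?_
          rw [hw', smul_add]
          refine (c s).add_mem ((c s).smul_mem _ hn) ?_
          rw [smul_smul]
          exact (hmemq _).mp hq'
      have hrq : ¬(∀ᶠ i in U, r i ∈ q) := by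
        intro h
        apply hP.ne_top
        apply Ideal.eq_top_of_isUnit_mem _ ((hPchar (fun _ => 1)).mpr
          (h.mono fun i hi => by simpa using hi)) ?_
        exact isUnit_one
      refine ⟨q, hq, ?_⟩
      ext z
      revert z
      refine fun z => Filter.Germ.inductionOn z fun g => ?_
      rw [hPchar g, mem_eIdeal]
      constructor
      · intro h
        have := Ultrafilter.eventually_or.mp (h.mono fun i hi => hq.mem_or_mem hi)
        rcases this with h' | h'
        · exact h'
        · exact absurd h' hrq
      · intro h
        exact h.mono fun i hi => q.mul_mem_right _ hi

end Aux

/-- For a commutative Noetherian ring `R`, a finitely generated `R`-module `M`, and the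
ultrapowers `*R`, `*M` over an ultrafilter `U`: the associated primes of the `*R`-module
`*M` are exactly the extensions `p·*R` of the associated primes `p` of `M`. -/
theorem ultrapower_associatedPrimes {ι R M : Type*} [CommRing R] [IsNoetherianRing R]
    [AddCommGroup M] [Module R M] [Module.Finite R M] (U : Ultrafilter ι) :
    associatedPrimes (Filter.Germ (U : Filter ι) R) (Filter.Germ (U : Filter ι) M) =
      (Ideal.map (diag U R)) '' associatedPrimes R M := by
  ext P
  constructor
  · rintro ⟨hP, x, hPx⟩
    revert hPx
    refine Filter.Germ.inductionOn x fun w => ?_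
    intro hPx
    obtain ⟨s, c, hc0, hcs, hsteps⟩ := exists_prime_filtration (R := R) (M := M)
    have hw : ∀ᶠ i in U, w i ∈ c s := Eventually.of_forall fun i => by rw [hcs]; trivial
    obtain ⟨q, hq, hPq⟩ := key_lemma U c hc0 s hsteps w hw P hP hPx
    refine ⟨q, ?_, by rw [map_diag_eq, hPq]⟩
    -- show q ∈ associatedPrimes R M
    obtain ⟨F, hF⟩ := IsNoetherian.noetherian q
    have h1 : ∀ᶠ i in U, ∀ a ∈ F, a ∈ ((⊥ : Submodule R M).colon {w i}).radical := by
      rw [eventually_all_finset]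
      intro a ha
      have haq : diag U R a ∈ P := by
        rw [hPq, diag_apply, mem_eIdeal]
        exact Eventually.of_forall fun _ => hF ▸ Submodule.subset_span ha
      rw [hPx, mem_rad_colon] at haq
      obtain ⟨n, hn⟩ := haq
      rw [diag_apply, ← Filter.Germ.coe_pow, germ_smul_coe, germ_coe_eq_zero] at hn
      exact hn.mono fun i hi => (mem_rad_colon _ _).mpr ⟨n, hi⟩
    have h1' : ∀ᶠ i in U, q ≤ ((⊥ : Submodule R M).colon {w i}).radical := by
      refine h1.mono fun i hi => ?_
      rw [← hF, Submodule.span_le]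
      intro a ha
      exact hi a ha
    have h2 : ∀ᶠ i in U, ((⊥ : Submodule R M).colon {w i}).radical ≤ q := by
      by_contra hcon
      rw [← Ultrafilter.eventually_not] at hcon
      have hch : ∀ i, ∃ a : R,
          ¬(((⊥ : Submodule R M).colon {w i}).radical ≤ q) → (a • w i = 0 ∧ a ∉ q) := by
        intro i
        by_cases h : ((⊥ : Submodule R M).colon {w i}).radical ≤ q
        · exact ⟨0, fun h' => absurd h h'⟩
        · obtain ⟨a, ha, haq⟩ := SetLike.not_le_iff_exists.mp h
          rw [mem_rad_colon] at ha
          obtain ⟨n, hn⟩ := ha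
          exact ⟨a ^ n, fun _ => ⟨hn, fun h' => haq (hq.mem_of_pow_mem n h')⟩⟩
      choose a ha using hch
      have haP : (↑a : Filter.Germ (U : Filter ι) R) ∈ P := by
        rw [hPx, mem_rad_colon]
        refine ⟨1, ?_⟩
        rw [pow_one, germ_smul_coe, germ_coe_eq_zero]
        exact hcon.mono fun i hi => (ha i hi).1
      rw [hPq, mem_eIdeal] at haP
      obtain ⟨i, hi1, hi2⟩ := (haP.and hcon).exists
      exact (ha i hi2).2 hi1
    have := (h1'.and h2).exists
    obtain ⟨i, hi1, hi2⟩ := this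
    exact ⟨hq, w i, le_antisymm hi1 hi2⟩
  · rintro ⟨q, ⟨hq, m, hqm⟩, rfl⟩
    rw [map_diag_eq]
    refine ⟨eIdeal_isPrime U hq, (↑(fun _ : ι => m) : Filter.Germ (U : Filter ι) M), ?_⟩
    ext z
    revert z
    refine fun z => Filter.Germ.inductionOn z fun g => ?_
    rw [mem_eIdeal, mem_rad_colon]
    obtain ⟨k, hk⟩ := Ideal.exists_pow_le_of_le_radical_of_fg (le_of_eq hqm)
      (IsNoetherian.noetherian q)
    constructor
    · intro h
      refine ⟨k, ?_⟩
      rw [← Filter.Germ.coe_pow, germ_smul_coe, germ_coe_eq_zero]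
      exact h.mono fun i hi => by
        have hgk : g i ^ k ∈ (⊥ : Submodule R M).colon {m} := hk (Ideal.pow_mem_pow hi k)
        rw [Submodule.mem_colon_singleton, Submodule.mem_bot] at hgk
        exact hgk
    · rintro ⟨n, hn⟩
      rw [← Filter.Germ.coe_pow, germ_smul_coe, germ_coe_eq_zero] at hn
      exact hn.mono fun i hi => by rw [hqm, mem_rad_colon]; exact ⟨n, hi⟩
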